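/- Let G be a linearly ordered abelian group. Assume that the order ball space of G (whose balls are all closed bounded intervals [a,b] with a ≤ b) is spherically complete, and that the ultrametric ball space of G (whose balls are all ultrametric balls B(a,c) = { x ∈ G : ∃ n ∈ ℕ, |x − a| ≤ n·|c| } with a, c ∈ G) is spherically complete. Let 𝓑 be the collection of all order-convex subsets of G that are nonempty unions of finitely many closed bounded intervals and ultrametric balls. Then (G, 𝓑) is spherically complete. (In fact, every such convex set is a bar-bell B(a,c) ∪ [a,b] ∪ B(b,d) with a ≤ b.) -/

import Mathlib

open Set

/-- A nest of balls in `B`: a nonempty subfamily of `B` totally ordered by inclusion. -/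
def IsNest {X : Type*} (B N : Set (Set X)) : Prop :=
  N.Nonempty ∧ N ⊆ B ∧ IsChain (· ⊆ ·) N

/-- Spherical completeness: every nest of balls has nonempty intersection. -/
def SphComplete {X : Type*} (B : Set (Set X)) : Prop :=
  ∀ N, IsNest B N → (⋂₀ N).Nonempty

/-- The ultrametric ball `B(a,c) = { x | ∃ n ∈ ℕ, |x − a| ≤ n·|c| }` of the natural
valuation of a linearly ordered abelian group. -/
def umBall {G : Type*} [AddCommGroup G] [LinearOrder G] [IsOrderedAddMonoid G] (a c : G) : Set G :=
  { x | ∃ n : ℕ, |x - a| ≤ n • |c| }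

/-- The order ball space: all closed bounded intervals `[a,b]` with `a ≤ b`. -/
def orderBalls (G : Type*) [AddCommGroup G] [LinearOrder G] [IsOrderedAddMonoid G] : Set (Set G) :=
  { S | ∃ a b : G, a ≤ b ∧ S = Icc a b }

/-- The ultrametric ball space: all ultrametric balls `B(a,c)`. -/
def umBalls (G : Type*) [AddCommGroup G] [LinearOrder G] [IsOrderedAddMonoid G] : Set (Set G) :=
  { S | ∃ a c : G, S = umBall a c }

/-- The bar-bells: sets of the form `B(a,c) ∪ [a,b] ∪ B(b,d)` with `a ≤ b`. -/
def barBells (G : Type*) [AddCommGroup G] [LinearOrder G] [IsOrderedAddMonoid G] : Set (Set G) :=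
  { S | ∃ a b c d : G, a ≤ b ∧ S = umBall a c ∪ Icc a b ∪ umBall b d }

/-- The order-convex subsets of `G` that are unions of finitely many (at least one)
closed bounded intervals and ultrametric balls. -/
def convexFinUnions (G : Type*) [AddCommGroup G] [LinearOrder G] [IsOrderedAddMonoid G] : Set (Set G) :=
  { S | (∀ x ∈ S, ∀ y ∈ S, ∀ z : G, x ≤ z → z ≤ y → z ∈ S) ∧
      ∃ F : Finset (Set G), F.Nonempty ∧ ↑F ⊆ orderBalls G ∪ umBalls G ∧
        S = ⋃₀ (↑F : Set (Set G)) }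


namespace BarbellAux
variable {G : Type*} [AddCommGroup G] [LinearOrder G] [IsOrderedAddMonoid G]


theorem mem_umBall_self (a c : G) : a ∈ umBall a c :=
  ⟨0, by simp⟩

theorem umBall_convex {a c x y z : G} (hx : x ∈ umBall a c) (hy : y ∈ umBall a c)
    (hxz : x ≤ z) (hzy : z ≤ y) : z ∈ umBall a c := by
  obtain ⟨n, hn⟩ := hx
  obtain ⟨m, hm⟩ := hy
  refine ⟨n + m, abs_sub_le_iff.mpr ⟨?_, ?_⟩⟩
  · calc z - a ≤ y - a := by gcongr
    _ ≤ |y - a| := le_abs_self _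
    _ ≤ m • |c| := hm
    _ ≤ (n + m) • |c| := nsmul_le_nsmul_left (abs_nonneg c) (by omega)
  · calc a - z ≤ a - x := by gcongr
    _ ≤ |x - a| := by rw [abs_sub_comm]; exact le_abs_self _
    _ ≤ n • |c| := hn
    _ ≤ (n + m) • |c| := nsmul_le_nsmul_left (abs_nonneg c) (by omega)

theorem umBall_subset_umBall {a b c d z : G} (hz1 : z ∈ umBall a c) (hz2 : z ∈ umBall b d)
    (hcd : |c| ≤ |d|) : umBall a c ⊆ umBall b d := by
  obtain ⟨m, hm⟩ := hz1
  obtain ⟨p, hp⟩ := hz2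
  rintro x ⟨n, hn⟩
  refine ⟨n + m + p, ?_⟩
  calc |x - b| ≤ |x - z| + |z - b| := abs_sub_le x z b
  _ ≤ (|x - a| + |a - z|) + |z - b| := by gcongr; exact abs_sub_le x a z
  _ ≤ (n • |c| + m • |c|) + p • |d| := by
      refine add_le_add (add_le_add hn ?_) hp
      rw [abs_sub_comm]; exact hm
  _ ≤ (n • |d| + m • |d|) + p • |d| :=
      add_le_add (add_le_add (nsmul_le_nsmul_right hcd n) (nsmul_le_nsmul_right hcd m)) le_rfl
  _ = (n + m + p) • |d| := by rw [add_nsmul, add_nsmul]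

theorem umBall_comparable {a b c d : G} (h : (umBall a c ∩ umBall b d).Nonempty) :
    umBall a c ⊆ umBall b d ∨ umBall b d ⊆ umBall a c := by
  obtain ⟨z, hz1, hz2⟩ := h
  rcases le_total |c| |d| with hcd | hdc
  · exact Or.inl (umBall_subset_umBall hz1 hz2 hcd)
  · exact Or.inr (umBall_subset_umBall hz2 hz1 hdc)

theorem umBall_zero (a : G) : umBall a (0 : G) = {a} := by
  ext x
  constructor
  · rintro ⟨n, hn⟩
    have h0 : |x - a| ≤ 0 := by simpa using hn
    have : x - a = 0 := abs_nonpos_iff.mp h0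
    have : x = a := by rwa [sub_eq_zero] at this
    simp [this]
  · intro h
    rw [mem_singleton_iff] at h
    subst h
    exact mem_umBall_self x 0



def NormalData (S : Set G) (a b c d : G) : Prop :=
  a ≤ b ∧ S = umBall a c ∪ Icc a b ∪ umBall b d ∧
    (∀ t ∈ S, t < a → t ∈ umBall a c) ∧ (∀ t ∈ S, b < t → t ∈ umBall b d)

theorem NormalData.bl_subset {S : Set G} {a b c d : G} (h : NormalData S a b c d) :
    umBall a c ⊆ S := by
  rw [h.2.1]; exact fun x hx => Or.inl (Or.inl hx)

theorem NormalData.br_subset {S : Set G} {a b c d : G} (h : NormalData S a b c d) :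
    umBall b d ⊆ S := by
  rw [h.2.1]; exact fun x hx => Or.inr hx

theorem NormalData.a_mem {S : Set G} {a b c d : G} (h : NormalData S a b c d) : a ∈ S :=
  h.bl_subset (mem_umBall_self a c)

theorem NormalData.b_mem {S : Set G} {a b c d : G} (h : NormalData S a b c d) : b ∈ S :=
  h.br_subset (mem_umBall_self b d)

theorem normalData_ball {S : Set G} (p q : G) (hS : S = umBall p q) :
    NormalData S p p q q := by
  subst hS
  refine ⟨le_rfl, ?_, fun t ht _ => ht, fun t ht _ => ht⟩
  apply Subset.antisymm
  · exact fun x hx => Or.inl (Or.inl hx)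
  · refine union_subset (union_subset Subset.rfl ?_) Subset.rfl
    rw [Icc_self, singleton_subset_iff]
    exact mem_umBall_self p q

theorem convexFinUnions_normal {S : Set G} (hS : S ∈ convexFinUnions G) :
    ∃ a b c d, NormalData S a b c d := by
  obtain ⟨conv, F, hFne, hFsub, hSeq⟩ := hS
  -- a piece that is downward cofinal
  have hmin : ∃ P ∈ F, ∀ x ∈ S, ∃ y ∈ P, y ≤ x := by
    by_contra hcon
    push_neg at hcon
    choose! g hg1 hg2 using hcon
    obtain ⟨Q, hQF, hQmin⟩ := F.exists_min_image g hFne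
    obtain ⟨R, hRF, hxR⟩ : ∃ R ∈ F, g Q ∈ R := by
      have := hg1 Q hQF
      rw [hSeq] at this
      obtain ⟨R, hR, hx⟩ := this
      exact ⟨R, hR, hx⟩
    exact absurd (hQmin R hRF) (not_le.mpr (hg2 R hRF (g Q) hxR))
  have hmax : ∃ P ∈ F, ∀ x ∈ S, ∃ y ∈ P, x ≤ y := by
    by_contra hcon
    push_neg at hcon
    choose! g hg1 hg2 using hcon
    obtain ⟨Q, hQF, hQmax⟩ := F.exists_max_image g hFne
    obtain ⟨R, hRF, hxR⟩ : ∃ R ∈ F, g Q ∈ R := by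
      have := hg1 Q hQF
      rw [hSeq] at this
      obtain ⟨R, hR, hx⟩ := this
      exact ⟨R, hR, hx⟩
    exact absurd (hQmax R hRF) (not_le.mpr (hg2 R hRF (g Q) hxR))
  have hPS : ∀ P ∈ F, P ⊆ S := by
    intro P hP x hx
    rw [hSeq]
    exact ⟨P, hP, hx⟩
  have hleft : ∃ a c : G, a ∈ S ∧ umBall a c ⊆ S ∧ ∀ x ∈ S, x ≤ a → x ∈ umBall a c := by
    obtain ⟨P, hPF, hPcof⟩ := hmin
    rcases hFsub hPF with hP | hP
    · obtain ⟨u, v, huv, hPe⟩ := hP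
      refine ⟨u, 0, hPS P hPF (hPe ▸ ⟨le_rfl, huv⟩), ?_, ?_⟩
      · rw [umBall_zero, singleton_subset_iff]
        exact hPS P hPF (hPe ▸ ⟨le_rfl, huv⟩)
      · intro x hx hxu
        obtain ⟨y, hyP, hyx⟩ := hPcof x hx
        rw [hPe] at hyP
        have : x = u := le_antisymm hxu (le_trans hyP.1 hyx)
        rw [umBall_zero, this]
        exact rfl
    · obtain ⟨e, f, hPe⟩ := hP
      refine ⟨e, f, hPS P hPF (hPe ▸ mem_umBall_self e f), ?_, ?_⟩
      · intro x hx
        exact hPS P hPF (hPe ▸ hx)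
      · intro x hx hxe
        obtain ⟨y, hyP, hyx⟩ := hPcof x hx
        rw [hPe] at hyP
        exact umBall_convex hyP (mem_umBall_self e f) hyx hxe
  have hright : ∃ b d : G, b ∈ S ∧ umBall b d ⊆ S ∧ ∀ x ∈ S, b ≤ x → x ∈ umBall b d := by
    obtain ⟨P, hPF, hPcof⟩ := hmax
    rcases hFsub hPF with hP | hP
    · obtain ⟨u, v, huv, hPe⟩ := hP
      refine ⟨v, 0, hPS P hPF (hPe ▸ ⟨huv, le_rfl⟩), ?_, ?_⟩
      · rw [umBall_zero, singleton_subset_iff]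
        exact hPS P hPF (hPe ▸ ⟨huv, le_rfl⟩)
      · intro x hx hvx
        obtain ⟨y, hyP, hyx⟩ := hPcof x hx
        rw [hPe] at hyP
        have : x = v := le_antisymm (le_trans hyx hyP.2) hvx
        rw [umBall_zero, this]
        exact rfl
    · obtain ⟨e, f, hPe⟩ := hP
      refine ⟨e, f, hPS P hPF (hPe ▸ mem_umBall_self e f), ?_, ?_⟩
      · intro x hx
        exact hPS P hPF (hPe ▸ hx)
      · intro x hx hex
        obtain ⟨y, hyP, hyx⟩ := hPcof x hx
        rw [hPe] at hyP
        exact umBall_convex (mem_umBall_self e f) hyP hex hyx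
  obtain ⟨a, c, haS, hBl, hcl⟩ := hleft
  obtain ⟨b, d, hbS, hBr, hcr⟩ := hright
  rcases le_total a b with hab | hba
  · refine ⟨a, b, c, d, hab, ?_, fun t ht hta => hcl t ht hta.le,
      fun t ht hbt => hcr t ht hbt.le⟩
    apply Subset.antisymm
    · intro x hx
      rcases le_total x a with h1 | h2
      · exact Or.inl (Or.inl (hcl x hx h1))
      · rcases le_total x b with h3 | h4
        · exact Or.inl (Or.inr ⟨h2, h3⟩)
        · exact Or.inr (hcr x hx h4)
    · refine union_subset (union_subset hBl ?_) hBr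
      rintro x ⟨h1, h2⟩
      exact conv a haS b hbS x h1 h2
  · have hbBl : b ∈ umBall a c := hcl b hbS hba
    rcases umBall_comparable ⟨b, hbBl, mem_umBall_self b d⟩ with hsub | hsub
    · refine ⟨b, b, d, d, normalData_ball b d ?_⟩
      apply Subset.antisymm
      · intro x hx
        rcases le_total x a with h1 | h2
        · exact hsub (hcl x hx h1)
        · exact hcr x hx (le_trans hba h2)
      · exact hBr
    · refine ⟨a, a, c, c, normalData_ball a c ?_⟩
      apply Subset.antisymm
      · intro x hx
        rcases le_total x a with h1 | h2
        · exact hcl x hx h1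
        · exact hsub (hcr x hx (le_trans hba h2))
      · exact hBl

theorem rec_mono {α : Type*} {ι : Type*} [LinearOrder α] [LinearOrder ι] [WellFoundedLT ι]
    (L : Set α) (e : ι → α)
    (hdom : ∀ (i : ι) (f : {j : ι // j < i} → α), (∀ j, f j ∈ L) →
      ∃ l ∈ L, e i ≤ l ∧ ∀ j, f j < l) :
    ∃ g : ι → α, (∀ i, g i ∈ L) ∧ (∀ i, e i ≤ g i) ∧ ∀ j i, j < i → g j < g i := by
  have wf : WellFounded ((· < ·) : ι → ι → Prop) := wellFounded_lt
  let body : ∀ i : ι, (∀ j, j < i → {l : α // l ∈ L}) → {l : α // l ∈ L} :=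
    fun i rec =>
      ⟨(hdom i (fun j => (rec j.1 j.2).1) (fun j => (rec j.1 j.2).2)).choose,
       (hdom i (fun j => (rec j.1 j.2).1) (fun j => (rec j.1 j.2).2)).choose_spec.1⟩
  let g0 : ι → {l : α // l ∈ L} := wf.fix body
  have hfix : ∀ i, g0 i = body i (fun j _ => g0 j) := fun i => wf.fix_eq body i
  have key : ∀ i : ι, e i ≤ (g0 i).1 ∧ ∀ j : {j : ι // j < i}, (g0 j.1).1 < (g0 i).1 := by
    intro i
    have h1 := congrArg Subtype.val (hfix i)
    have hspec := (hdom i (fun j : {j : ι // j < i} => (g0 j.1).1)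
      (fun j => (g0 j.1).2)).choose_spec
    constructor
    · rw [h1]
      exact hspec.2.1
    · intro j
      rw [h1]
      exact hspec.2.2 j
  exact ⟨fun i => (g0 i).1, fun i => (g0 i).2, fun i => (key i).1,
    fun j i hj => (key i).2 ⟨j, hj⟩⟩

theorem rec_anti {α : Type*} {ι : Type*} [LinearOrder α] [LinearOrder ι] [WellFoundedLT ι]
    (L : Set α) (e : ι → α)
    (hdom : ∀ (i : ι) (f : {j : ι // j < i} → α), (∀ j, f j ∈ L) →
      ∃ l ∈ L, l ≤ e i ∧ ∀ j, l < f j) :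
    ∃ g : ι → α, (∀ i, g i ∈ L) ∧ (∀ i, g i ≤ e i) ∧ ∀ j i, j < i → g i < g j := by
  have wf : WellFounded ((· < ·) : ι → ι → Prop) := wellFounded_lt
  let body : ∀ i : ι, (∀ j, j < i → {l : α // l ∈ L}) → {l : α // l ∈ L} :=
    fun i rec =>
      ⟨(hdom i (fun j => (rec j.1 j.2).1) (fun j => (rec j.1 j.2).2)).choose,
       (hdom i (fun j => (rec j.1 j.2).1) (fun j => (rec j.1 j.2).2)).choose_spec.1⟩
  let g0 : ι → {l : α // l ∈ L} := wf.fix body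
  have hfix : ∀ i, g0 i = body i (fun j _ => g0 j) := fun i => wf.fix_eq body i
  have key : ∀ i : ι, (g0 i).1 ≤ e i ∧ ∀ j : {j : ι // j < i}, (g0 i).1 < (g0 j.1).1 := by
    intro i
    have h1 := congrArg Subtype.val (hfix i)
    have hspec := (hdom i (fun j : {j : ι // j < i} => (g0 j.1).1)
      (fun j => (g0 j.1).2)).choose_spec
    constructor
    · rw [h1]
      exact hspec.2.1
    · intro j
      rw [h1]
      exact hspec.2.2 j
  exact ⟨fun i => (g0 i).1, fun i => (g0 i).2, fun i => (key i).1,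
    fun j i hj => (key i).2 ⟨j, hj⟩⟩

open Cardinal in
theorem interpolate (ho : SphComplete (orderBalls G)) (L U X Y : Set G)
    (hLU : ∀ l ∈ L, ∀ u ∈ U, l < u) (hLne : L.Nonempty)
    (hXL : X ⊆ L) (hYU : Y ⊆ U)
    (hXcof : ∀ l ∈ L, ∃ x ∈ X, l ≤ x) (hYcoi : ∀ u ∈ U, ∃ y ∈ Y, y ≤ u)
    (hcard : #X = #Y)
    (hXmin : ∀ S : Set G, S ⊆ L → #S < #X → ∃ l ∈ L, ∀ s ∈ S, s < l)
    (hYmin : ∀ S : Set G, S ⊆ U → #S < #X → ∃ u ∈ U, ∀ s ∈ S, u < s) :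
    ∃ z : G, (∀ l ∈ L, l ≤ z) ∧ (∀ u ∈ U, z ≤ u) := by
  rcases lt_or_ge (#X) ℵ₀ with hfin | hinf
  · -- finite case : X has a maximum
    have hXfin : X.Finite := lt_aleph0_iff_set_finite.mp hfin
    have hXne : X.Nonempty := by
      obtain ⟨l, hl⟩ := hLne
      obtain ⟨x, hx, -⟩ := hXcof l hl
      exact ⟨x, hx⟩
    obtain ⟨m, hmX, hm⟩ := Set.exists_max_image X id hXfin hXne
    refine ⟨m, ?_, ?_⟩
    · intro l hl
      obtain ⟨x, hx, hlx⟩ := hXcof l hl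
      exact le_trans hlx (hm x hx)
    · intro u hu
      exact (hLU m (hXL hmX) u hu).le
  · -- infinite case
    set κ := #X with hκ
    set ι := κ.ord.ToType with hι
    have hmkι : #ι = κ := by rw [hι, mk_toType, card_ord]
    have hιne : Nonempty ι := by
      rw [hι]
      refine Ordinal.toType_nonempty_iff_ne_zero.mpr fun h0 => ?_
      rw [Cardinal.ord_eq_zero] at h0
      rw [h0] at hinf
      exact (not_le.mpr aleph0_pos) hinf
    obtain ⟨eX⟩ : Nonempty (ι ≃ X) := Cardinal.eq.mp (by rw [hmkι])
    obtain ⟨eY⟩ : Nonempty (ι ≃ Y) := Cardinal.eq.mp (by rw [hmkι, hcard])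
    have hseg : ∀ i : ι, #{j : ι // j < i} < κ := by
      intro i
      exact Cardinal.mk_Iio_ord_toType i
    have hcards : ∀ (i : ι) (f : {j : ι // j < i} → G) (w : G),
        #(insert w (Set.range f) : Set G) < #X := by
      intro i f w
      calc #(insert w (Set.range f) : Set G) ≤ #(Set.range f) + 1 := mk_insert_le
      _ ≤ #{j : ι // j < i} + 1 := by
          exact add_le_add_left mk_range_le 1
      _ < κ := add_lt_of_lt hinf (hseg i) (lt_of_lt_of_le one_lt_aleph0 hinf)
    have hdomx : ∀ (i : ι) (f : {j : ι // j < i} → G), (∀ j, f j ∈ L) →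
        ∃ l ∈ L, ((eX i : G)) ≤ l ∧ ∀ j, f j < l := by
      intro i f hf
      have hS : (insert ((eX i : G)) (Set.range f) : Set G) ⊆ L := by
        rintro s hs
        rcases hs with rfl | ⟨j, rfl⟩
        · exact hXL (eX i).2
        · exact hf j
      obtain ⟨l, hl, hbound⟩ := hXmin _ hS (hcards i f _)
      exact ⟨l, hl, (hbound _ (mem_insert _ _)).le,
        fun j => hbound _ (mem_insert_of_mem _ ⟨j, rfl⟩)⟩
    have hdomy : ∀ (i : ι) (f : {j : ι // j < i} → G), (∀ j, f j ∈ U) →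
        ∃ u ∈ U, u ≤ ((eY i : G)) ∧ ∀ j, u < f j := by
      intro i f hf
      have hS : (insert ((eY i : G)) (Set.range f) : Set G) ⊆ U := by
        rintro s hs
        rcases hs with rfl | ⟨j, rfl⟩
        · exact hYU (eY i).2
        · exact hf j
      obtain ⟨u, hm, hbound⟩ := hYmin _ hS (hcards i f _)
      exact ⟨u, hm, (hbound _ (mem_insert _ _)).le,
        fun j => hbound _ (mem_insert_of_mem _ ⟨j, rfl⟩)⟩
    obtain ⟨gx, hgxL, hgxe, hgxmono⟩ := rec_mono L (fun i => (eX i : G)) hdomx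
    obtain ⟨gy, hgyU, hgye, hgyanti⟩ := rec_anti U (fun i => (eY i : G)) hdomy
    set C : Set (Set G) := {I | ∃ i : ι, I = Icc (gx i) (gy i)} with hC
    have hCnest : IsNest (orderBalls G) C := by
      refine ⟨⟨Icc (gx (Classical.arbitrary ι)) (gy (Classical.arbitrary ι)),
        ⟨Classical.arbitrary ι, rfl⟩⟩, ?_, ?_⟩
      · rintro I ⟨i, rfl⟩
        exact ⟨gx i, gy i, (hLU _ (hgxL i) _ (hgyU i)).le, rfl⟩
      · rintro I ⟨i, rfl⟩ I' ⟨i', rfl⟩ _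
        rcases lt_trichotomy i i' with h | h | h
        · exact Or.inr (Icc_subset_Icc (hgxmono i i' h).le (hgyanti i i' h).le)
        · rw [h]
          exact Or.inl Subset.rfl
        · exact Or.inl (Icc_subset_Icc (hgxmono i' i h).le (hgyanti i' i h).le)
    obtain ⟨z, hz⟩ := ho C hCnest
    have hzi : ∀ i : ι, gx i ≤ z ∧ z ≤ gy i := by
      intro i
      have := hz (Icc (gx i) (gy i)) ⟨i, rfl⟩
      exact ⟨this.1, this.2⟩
    refine ⟨z, ?_, ?_⟩
    · intro l hl
      obtain ⟨x, hxX, hlx⟩ := hXcof l hl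
      have hex : (eX (eX.symm ⟨x, hxX⟩) : G) = x := by simp
      calc l ≤ x := hlx
      _ = (eX (eX.symm ⟨x, hxX⟩) : G) := hex.symm
      _ ≤ gx (eX.symm ⟨x, hxX⟩) := hgxe _
      _ ≤ z := (hzi _).1
    · intro u hu
      obtain ⟨y, hyY, hyu⟩ := hYcoi u hu
      have hey : (eY (eY.symm ⟨y, hyY⟩) : G) = y := by simp
      calc z ≤ gy (eY.symm ⟨y, hyY⟩) := (hzi _).2
      _ ≤ (eY (eY.symm ⟨y, hyY⟩) : G) := hgye _
      _ = y := hey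
      _ ≤ u := hyu

end BarbellAux

open BarbellAux Cardinal in
theorem convexFinUnions_sphComplete' {G : Type*} [AddCommGroup G] [LinearOrder G] [IsOrderedAddMonoid G]
    (ho : SphComplete (orderBalls G)) (hu : SphComplete (umBalls G)) :
    SphComplete (convexFinUnions G) ∧ convexFinUnions G ⊆ barBells G := by
  have hsub : convexFinUnions G ⊆ barBells G := by
    intro S hS
    obtain ⟨a, b, c, d, h⟩ := convexFinUnions_normal hS
    exact ⟨a, b, c, d, h.1, h.2.1⟩
  refine ⟨?_, hsub⟩
  rintro N ⟨hNne, hNsub, hNchain⟩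
  by_contra hcon
  have hempty : ∀ z : G, ∃ T ∈ N, z ∉ T := by
    intro z
    by_contra h
    push_neg at h
    exact hcon ⟨z, Set.mem_sInter.mpr h⟩
  have hdata : ∀ T ∈ N, ∃ a b c d, NormalData T a b c d :=
    fun T hT => convexFinUnions_normal (hNsub hT)
  choose! fa fb fc fd hnd using hdata
  have hconv : ∀ T ∈ N, ∀ x ∈ T, ∀ y ∈ T, ∀ z : G, x ≤ z → z ≤ y → z ∈ T :=
    fun T hT => (hNsub hT).1
  have haT : ∀ T ∈ N, fa T ∈ T := fun T hT => (hnd T hT).a_mem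
  have hbT : ∀ T ∈ N, fb T ∈ T := fun T hT => (hnd T hT).b_mem
  have hBl : ∀ T ∈ N, umBall (fa T) (fc T) ⊆ T := fun T hT => (hnd T hT).bl_subset
  have hBr : ∀ T ∈ N, umBall (fb T) (fd T) ⊆ T := fun T hT => (hnd T hT).br_subset
  have hnL : ∀ T ∈ N, ∀ t ∈ T, t < fa T → t ∈ umBall (fa T) (fc T) :=
    fun T hT => (hnd T hT).2.2.1
  have hnR : ∀ T ∈ N, ∀ t ∈ T, fb T < t → t ∈ umBall (fb T) (fd T) :=
    fun T hT => (hnd T hT).2.2.2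
  have hTne : ∀ T ∈ N, T.Nonempty := fun T hT => ⟨fa T, haT T hT⟩
  set L := {z : G | ∃ T ∈ N, ∀ t ∈ T, z < t} with hLdef
  set U := {z : G | ∃ T ∈ N, ∀ t ∈ T, t < z} with hUdef
  have hLU : ∀ z : G, z ∈ L ∨ z ∈ U := by
    intro z
    obtain ⟨T, hTN, hzT⟩ := hempty z
    by_cases hlow : ∃ t ∈ T, t ≤ z
    · by_cases hhigh : ∃ t ∈ T, z ≤ t
      · obtain ⟨t1, ht1, h1⟩ := hlow
        obtain ⟨t2, ht2, h2⟩ := hhigh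
        exact absurd (hconv T hTN t1 ht1 t2 ht2 z h1 h2) hzT
      · push_neg at hhigh
        exact Or.inr ⟨T, hTN, fun t ht => hhigh t ht⟩
    · push_neg at hlow
      exact Or.inl ⟨T, hTN, fun t ht => hlow t ht⟩
  have hdisj : ∀ l ∈ L, ∀ u ∈ U, l < u := by
    rintro l ⟨T1, hT1, h1⟩ u ⟨T2, hT2, h2⟩
    rcases hNchain.total hT1 hT2 with hss | hss
    · obtain ⟨t, ht⟩ := hTne T1 hT1
      exact lt_trans (h1 t ht) (h2 t (hss ht))
    · obtain ⟨t, ht⟩ := hTne T2 hT2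
      exact lt_trans (h1 t (hss ht)) (h2 t ht)
  -- Case A : L = ∅
  by_cases hLe : L = ∅
  · have hcoi : ∀ (z : G), ∀ T ∈ N, ∃ t ∈ T, t ≤ z := by
      intro z T hT
      by_contra h
      push_neg at h
      have hzL : z ∈ L := ⟨T, hT, fun t ht => h t ht⟩
      rw [hLe] at hzL
      exact hzL
    have hcoiBl : ∀ T ∈ N, ∀ z : G, ∃ β ∈ umBall (fa T) (fc T), β ≤ z := by
      intro T hT z
      obtain ⟨t, htT, htz⟩ := hcoi z T hT
      rcases lt_or_ge t (fa T) with h | h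
      · exact ⟨t, hnL T hT t htT h, htz⟩
      · exact ⟨fa T, mem_umBall_self _ _, le_trans h htz⟩
    have hint : ∀ T ∈ N, ∀ T' ∈ N,
        ((umBall (fa T) (fc T)) ∩ (umBall (fa T') (fc T'))).Nonempty := by
      intro T hT T' hT'
      obtain ⟨β, hβ, hβle⟩ := hcoiBl T hT (fa T')
      obtain ⟨β', hβ', hβ'le⟩ := hcoiBl T' hT' β
      exact ⟨β, hβ, umBall_convex hβ' (mem_umBall_self _ _) hβ'le hβle⟩
    obtain ⟨T0, hT0⟩ := hNne
    obtain ⟨z, hz⟩ := hu {B | ∃ T ∈ N, B = umBall (fa T) (fc T)}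
      ⟨⟨umBall (fa T0) (fc T0), T0, hT0, rfl⟩,
       (by rintro B ⟨T, hT, rfl⟩; exact ⟨fa T, fc T, rfl⟩),
       (by rintro B ⟨T, hT, rfl⟩ B' ⟨T', hT', rfl⟩ _
           exact umBall_comparable (hint T hT T' hT'))⟩
    exact hcon ⟨z, Set.mem_sInter.mpr fun T hT =>
      hBl T hT (hz (umBall (fa T) (fc T)) ⟨T, hT, rfl⟩)⟩
  -- Case B : U = ∅
  · by_cases hUe : U = ∅
    · have hcof : ∀ (z : G), ∀ T ∈ N, ∃ t ∈ T, z ≤ t := by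
        intro z T hT
        by_contra h
        push_neg at h
        have hzU : z ∈ U := ⟨T, hT, fun t ht => h t ht⟩
        rw [hUe] at hzU
        exact hzU
      have hcofBr : ∀ T ∈ N, ∀ z : G, ∃ β ∈ umBall (fb T) (fd T), z ≤ β := by
        intro T hT z
        obtain ⟨t, htT, htz⟩ := hcof z T hT
        rcases lt_or_ge (fb T) t with h | h
        · exact ⟨t, hnR T hT t htT h, htz⟩
        · exact ⟨fb T, mem_umBall_self _ _, le_trans htz h⟩
      have hint : ∀ T ∈ N, ∀ T' ∈ N,
          ((umBall (fb T) (fd T)) ∩ (umBall (fb T') (fd T'))).Nonempty := by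
        intro T hT T' hT'
        obtain ⟨β, hβ, hβle⟩ := hcofBr T hT (fb T')
        obtain ⟨β', hβ', hβ'le⟩ := hcofBr T' hT' β
        exact ⟨β, hβ, umBall_convex (mem_umBall_self _ _) hβ' hβle hβ'le⟩
      obtain ⟨T0, hT0⟩ := hNne
      obtain ⟨z, hz⟩ := hu {B | ∃ T ∈ N, B = umBall (fb T) (fd T)}
        ⟨⟨umBall (fb T0) (fd T0), T0, hT0, rfl⟩,
         (by rintro B ⟨T, hT, rfl⟩; exact ⟨fb T, fd T, rfl⟩),
         (by rintro B ⟨T, hT, rfl⟩ B' ⟨T', hT', rfl⟩ _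
             exact umBall_comparable (hint T hT T' hT'))⟩
      exact hcon ⟨z, Set.mem_sInter.mpr fun T hT =>
        hBr T hT (hz (umBall (fb T) (fd T)) ⟨T, hT, rfl⟩)⟩
    -- Case C : some element of the nest inside L
    · by_cases hCc : ∃ T0 ∈ N, T0 ⊆ L
      · obtain ⟨T0, hT0N, hT0L⟩ := hCc
        have key : ∀ T ∈ N, T ⊆ T0 → ∀ T' ∈ N, T' ⊆ T →
            ((umBall (fb T') (fd T')) ∩ (umBall (fb T) (fd T))).Nonempty := by
          intro T hTN hTT0 T' hT'N hT'T
          have hb'T : fb T' ∈ T := hT'T (hbT T' hT'N)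
          rcases lt_or_ge (fb T) (fb T') with h | h
          · exact ⟨fb T', mem_umBall_self _ _, hnR T hTN _ hb'T h⟩
          · have hbL : fb T ∈ L := hT0L (hTT0 (hbT T hTN))
            obtain ⟨T3, hT3N, hT3⟩ := hbL
            rcases hNchain.total hT'N hT3N with hs | hs
            · exact absurd (hT3 (fb T') (hs (hbT T' hT'N))) (not_lt.mpr h)
            · obtain ⟨t3, ht3⟩ := hTne T3 hT3N
              have ht3T' : t3 ∈ T' := hs ht3
              have hgt : fb T < t3 := hT3 t3 ht3
              exact ⟨t3, hnR T' hT'N t3 ht3T' (lt_of_le_of_lt h hgt),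
                hnR T hTN t3 (hT'T ht3T') hgt⟩
        obtain ⟨z, hz⟩ := hu {B | ∃ T ∈ N, T ⊆ T0 ∧ B = umBall (fb T) (fd T)}
          ⟨⟨umBall (fb T0) (fd T0), T0, hT0N, Subset.rfl, rfl⟩,
           (by rintro B ⟨T, hT, _, rfl⟩; exact ⟨fb T, fd T, rfl⟩),
           (by rintro B ⟨T, hT, hTT0, rfl⟩ B' ⟨T', hT', hT'T0, rfl⟩ _
               rcases hNchain.total hT hT' with hs | hs
               · rcases umBall_comparable (key T' hT' hT'T0 T hT hs) with h | h
                 · exact Or.inl h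
                 · exact Or.inr h
               · rcases umBall_comparable (key T hT hTT0 T' hT' hs) with h | h
                 · exact Or.inr h
                 · exact Or.inl h)⟩
        refine hcon ⟨z, Set.mem_sInter.mpr fun T hT => ?_⟩
        rcases hNchain.total hT0N hT with hs | hs
        · exact hs (hBr T0 hT0N (hz (umBall (fb T0) (fd T0)) ⟨T0, hT0N, Subset.rfl, rfl⟩))
        · exact hBr T hT (hz (umBall (fb T) (fd T)) ⟨T, hT, hs, rfl⟩)
      -- Case D : some element of the nest inside U
      · by_cases hDc : ∃ T0 ∈ N, T0 ⊆ U
        · obtain ⟨T0, hT0N, hT0U⟩ := hDc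
          have key : ∀ T ∈ N, T ⊆ T0 → ∀ T' ∈ N, T' ⊆ T →
              ((umBall (fa T') (fc T')) ∩ (umBall (fa T) (fc T))).Nonempty := by
            intro T hTN hTT0 T' hT'N hT'T
            have ha'T : fa T' ∈ T := hT'T (haT T' hT'N)
            rcases lt_or_ge (fa T') (fa T) with h | h
            · exact ⟨fa T', mem_umBall_self _ _, hnL T hTN _ ha'T h⟩
            · have haU : fa T ∈ U := hT0U (hTT0 (haT T hTN))
              obtain ⟨T3, hT3N, hT3⟩ := haU
              rcases hNchain.total hT'N hT3N with hs | hs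
              · exact absurd (hT3 (fa T') (hs (haT T' hT'N))) (not_lt.mpr h)
              · obtain ⟨t3, ht3⟩ := hTne T3 hT3N
                have ht3T' : t3 ∈ T' := hs ht3
                have hlt : t3 < fa T := hT3 t3 ht3
                exact ⟨t3, hnL T' hT'N t3 ht3T' (lt_of_lt_of_le hlt h),
                  hnL T hTN t3 (hT'T ht3T') hlt⟩
          obtain ⟨z, hz⟩ := hu {B | ∃ T ∈ N, T ⊆ T0 ∧ B = umBall (fa T) (fc T)}
            ⟨⟨umBall (fa T0) (fc T0), T0, hT0N, Subset.rfl, rfl⟩,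
             (by rintro B ⟨T, hT, _, rfl⟩; exact ⟨fa T, fc T, rfl⟩),
             (by rintro B ⟨T, hT, hTT0, rfl⟩ B' ⟨T', hT', hT'T0, rfl⟩ _
                 rcases hNchain.total hT hT' with hs | hs
                 · rcases umBall_comparable (key T' hT' hT'T0 T hT hs) with h | h
                   · exact Or.inl h
                   · exact Or.inr h
                 · rcases umBall_comparable (key T hT hTT0 T' hT' hs) with h | h
                   · exact Or.inr h
                   · exact Or.inl h)⟩
          refine hcon ⟨z, Set.mem_sInter.mpr fun T hT => ?_⟩
          rcases hNchain.total hT0N hT with hs | hs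
          · exact hs (hBl T0 hT0N (hz (umBall (fa T0) (fc T0)) ⟨T0, hT0N, Subset.rfl, rfl⟩))
          · exact hBl T hT (hz (umBall (fa T) (fc T)) ⟨T, hT, hs, rfl⟩)
        -- Case E : every element of the nest meets both L and U
        · push_neg at hCc hDc
          have hTL : ∀ T ∈ N, ∃ t ∈ T, t ∈ L := by
            intro T hT
            obtain ⟨t, htT, htU⟩ := Set.not_subset.mp (hDc T hT)
            exact ⟨t, htT, (hLU t).resolve_right htU⟩
          have hTU : ∀ T ∈ N, ∃ t ∈ T, t ∈ U := by
            intro T hT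
            obtain ⟨t, htT, htL⟩ := Set.not_subset.mp (hCc T hT)
            exact ⟨t, htT, (hLU t).resolve_left htL⟩
          have hLne : L.Nonempty := by
            obtain ⟨T0, hT0⟩ := hNne
            obtain ⟨t, -, htL⟩ := hTL T0 hT0
            exact ⟨t, htL⟩
          have hUne : U.Nonempty := by
            obtain ⟨T0, hT0⟩ := hNne
            obtain ⟨t, -, htU⟩ := hTU T0 hT0
            exact ⟨t, htU⟩
          classical
          set cofS : Set Cardinal := {c | ∃ X : Set G, X ⊆ L ∧ (∀ l ∈ L, ∃ x ∈ X, l ≤ x) ∧ #X = c}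
            with hcofSdef
          have hcofSne : cofS.Nonempty := ⟨#L, L, Subset.rfl, fun l hl => ⟨l, hl, le_rfl⟩, rfl⟩
          set coiS : Set Cardinal := {c | ∃ Y : Set G, Y ⊆ U ∧ (∀ u ∈ U, ∃ y ∈ Y, y ≤ u) ∧ #Y = c}
            with hcoiSdef
          have hcoiSne : coiS.Nonempty := ⟨#U, U, Subset.rfl, fun u hu => ⟨u, hu, le_rfl⟩, rfl⟩
          obtain ⟨X, hXL, hXcof, hXcard⟩ := csInf_mem hcofSne
          obtain ⟨Y, hYU, hYcoi, hYcard⟩ := csInf_mem hcoiSne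
          -- κ ≤ λ
          have hchoiceU : ∀ u ∈ U, ∃ x T, x ∈ L ∧ T ∈ N ∧ x ∈ T ∧ ∀ t ∈ T, t < u := by
            rintro u ⟨T2, hT2N, h2⟩
            obtain ⟨x, hxT, hxL⟩ := hTL T2 hT2N
            exact ⟨x, T2, hxL, hT2N, hxT, h2⟩
          choose! xf Tf hx1 hx2 hx3 hx4 using hchoiceU
          have hchoiceL : ∀ l ∈ L, ∃ y T, y ∈ U ∧ T ∈ N ∧ y ∈ T ∧ ∀ t ∈ T, l < t := by
            rintro l ⟨T2, hT2N, h2⟩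
            obtain ⟨y, hyT, hyU⟩ := hTU T2 hT2N
            exact ⟨y, T2, hyU, hT2N, hyT, h2⟩
          choose! yf Sf hy1 hy2 hy3 hy4 using hchoiceL
          have hkl : sInf cofS ≤ sInf coiS := by
            have hcof' : ∀ l ∈ L, ∃ x ∈ xf '' Y, l ≤ x := by
              intro l hl
              obtain ⟨T1, hT1N, hgt⟩ := hl
              have hyex : ∃ y ∈ Y, Tf y ⊆ T1 := by
                by_contra h
                push_neg at h
                obtain ⟨t, htT1, htU⟩ := hTU T1 hT1N
                obtain ⟨y, hyY, hyt⟩ := hYcoi t htU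
                have hs : T1 ⊆ Tf y :=
                  (hNchain.total (hx2 y (hYU hyY)) hT1N).resolve_left (h y hyY)
                exact absurd (hx4 y (hYU hyY) t (hs htT1)) (not_lt.mpr hyt)
              obtain ⟨y, hyY, hs⟩ := hyex
              exact ⟨xf y, Set.mem_image_of_mem _ hyY,
                (hgt (xf y) (hs (hx3 y (hYU hyY)))).le⟩
            have hmem : #(xf '' Y) ∈ cofS :=
              ⟨xf '' Y, (by rintro x ⟨y, hy, rfl⟩; exact hx1 y (hYU hy)), hcof', rfl⟩
            calc sInf cofS ≤ #(xf '' Y) := csInf_le' hmem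
            _ ≤ #Y := Cardinal.mk_image_le
            _ = sInf coiS := hYcard
          have hlk : sInf coiS ≤ sInf cofS := by
            have hcoi' : ∀ u ∈ U, ∃ y ∈ yf '' X, y ≤ u := by
              intro u hu
              obtain ⟨T1, hT1N, hlt⟩ := hu
              have hxex : ∃ x ∈ X, Sf x ⊆ T1 := by
                by_contra h
                push_neg at h
                obtain ⟨t, htT1, htL⟩ := hTL T1 hT1N
                obtain ⟨x, hxX, hxt⟩ := hXcof t htL
                have hs : T1 ⊆ Sf x :=
                  (hNchain.total (hy2 x (hXL hxX)) hT1N).resolve_left (h x hxX)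
                exact absurd (hy4 x (hXL hxX) t (hs htT1)) (not_lt.mpr hxt)
              obtain ⟨x, hxX, hs⟩ := hxex
              exact ⟨yf x, Set.mem_image_of_mem _ hxX,
                (hlt (yf x) (hs (hy3 x (hXL hxX)))).le⟩
            have hmem : #(yf '' X) ∈ coiS :=
              ⟨yf '' X, (by rintro y ⟨x, hx, rfl⟩; exact hy1 x (hXL hx)), hcoi', rfl⟩
            calc sInf coiS ≤ #(yf '' X) := csInf_le' hmem
            _ ≤ #X := Cardinal.mk_image_le
            _ = sInf cofS := hXcard
          have hXYcard : #X = #Y := by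
            rw [hXcard, hYcard]
            exact le_antisymm hkl hlk
          have hXmin : ∀ S : Set G, S ⊆ L → #S < #X → ∃ l ∈ L, ∀ s ∈ S, s < l := by
            intro S hSL hlt
            by_contra h
            push_neg at h
            have hScof : ∀ l ∈ L, ∃ s ∈ S, l ≤ s := by
              intro l hl
              obtain ⟨s, hsS, hsl⟩ := h l hl
              exact ⟨s, hsS, hsl⟩
            have : #S ∈ cofS := ⟨S, hSL, hScof, rfl⟩
            rw [hXcard] at hlt
            exact absurd (csInf_le' this) (not_le.mpr hlt)
          have hYmin : ∀ S : Set G, S ⊆ U → #S < #X → ∃ u ∈ U, ∀ s ∈ S, u < s := by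
            intro S hSU hlt
            by_contra h
            push_neg at h
            have hScoi : ∀ u ∈ U, ∃ s ∈ S, s ≤ u := by
              intro u hui
              obtain ⟨s, hsS, hsu⟩ := h u hui
              exact ⟨s, hsS, hsu⟩
            have : #S ∈ coiS := ⟨S, hSU, hScoi, rfl⟩
            rw [hXYcard, hYcard] at hlt
            exact absurd (csInf_le' this) (not_le.mpr hlt)
          obtain ⟨z, hzL, hzU⟩ := interpolate ho L U X Y hdisj hLne hXL hYU hXcof hYcoi
            hXYcard hXmin hYmin
          rcases hLU z with hz | hz
          · obtain ⟨T, hTN, hgt⟩ := hz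
            obtain ⟨l, hlT, hlL⟩ := hTL T hTN
            exact absurd (hzL l hlL) (not_le.mpr (hgt l hlT))
          · obtain ⟨T, hTN, hlt⟩ := hz
            obtain ⟨u', hu'T, hu'U⟩ := hTU T hTN
            exact absurd (hzU u' hu'U) (not_le.mpr (hlt u' hu'T))

theorem convexFinUnions_sphComplete {G : Type*} [AddCommGroup G] [LinearOrder G] [IsOrderedAddMonoid G]
    (ho : SphComplete (orderBalls G)) (hu : SphComplete (umBalls G)) :
    SphComplete (convexFinUnions G) ∧ convexFinUnions G ⊆ barBells G := convexFinUnions_sphComplete' ho hu
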